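/- Let B₁, B₂ be commuting k×k complex matrices and I a k×1 column vector. Suppose ξ(z₁,z₂) is a polynomial such that there exist vector-valued polynomials ψ₁, ψ₂ with I·ξ(z₁,z₂) = (z₂ − B₂)ψ₁(z₁,z₂) + (z₁ − B₁)ψ₂(z₁,z₂) identically. Then ξ(B₁, B₂)·v = 0 for every vector v in the smallest B₁,B₂-invariant subspace containing the image of I; in particular if ℂ^k is generated by I under B₁,B₂ (stability), then ξ(B₁,B₂) = 0. -/

import Mathlib

open MvPolynomial

lemma sum_mulVec_aux {k : ℕ} {ι : Type*} (s : Finset ι)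
    (f : ι → Matrix (Fin k) (Fin k) ℂ) (v : Fin k → ℂ) :
    (∑ j ∈ s, f j).mulVec v = ∑ j ∈ s, (f j).mulVec v := by
  classical
  induction s using Finset.induction with
  | empty => simp [Matrix.zero_mulVec]
  | insert _ _ h ih => simp [Finset.sum_insert h, Matrix.add_mulVec, ih]

lemma mulVec_sum_aux {k : ℕ} {ι : Type*} (s : Finset ι)
    (M : Matrix (Fin k) (Fin k) ℂ) (v : ι → Fin k → ℂ) :
    M.mulVec (∑ j ∈ s, v j) = ∑ j ∈ s, M.mulVec (v j) := by
  classical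
  induction s using Finset.induction with
  | empty => simp [Matrix.mulVec_zero]
  | insert _ _ h ih => simp [Finset.sum_insert h, Matrix.mulVec_add, ih]

/-- Evaluation of a two-variable polynomial on a pair of matrices. -/
noncomputable def evalMatFun (k : ℕ) (B₁ B₂ : Matrix (Fin k) (Fin k) ℂ)
    (p : MvPolynomial (Fin 2) ℂ) : Matrix (Fin k) (Fin k) ℂ :=
  (AddMonoidAlgebra.coeff p).sum fun m c => c • (B₁ ^ m 0 * B₂ ^ m 1)

lemma evalMatFun_add (k : ℕ) (B₁ B₂ : Matrix (Fin k) (Fin k) ℂ)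
    (p q : MvPolynomial (Fin 2) ℂ) :
    evalMatFun k B₁ B₂ (p + q) = evalMatFun k B₁ B₂ p + evalMatFun k B₁ B₂ q := by
  unfold evalMatFun; rw [AddMonoidAlgebra.coeff_add]; exact Finsupp.sum_add_index' (fun m => zero_smul _ _) (fun m c c' => add_smul _ _ _)

/-- Evaluation of a two-variable polynomial on a pair of matrices, as an additive map. -/
noncomputable def evalMat (k : ℕ) (B₁ B₂ : Matrix (Fin k) (Fin k) ℂ) :
    MvPolynomial (Fin 2) ℂ →+ Matrix (Fin k) (Fin k) ℂ :=
  AddMonoidHom.mk' (evalMatFun k B₁ B₂) (evalMatFun_add k B₁ B₂)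

lemma evalMat_apply (k : ℕ) (B₁ B₂ : Matrix (Fin k) (Fin k) ℂ) (p : MvPolynomial (Fin 2) ℂ) :
    evalMat k B₁ B₂ p = (AddMonoidAlgebra.coeff p).sum fun m c => c • (B₁ ^ m 0 * B₂ ^ m 1) := rfl

lemma evalMat_monomial (k : ℕ) (B₁ B₂ : Matrix (Fin k) (Fin k) ℂ)
    (m : Fin 2 →₀ ℕ) (c : ℂ) :
    evalMat k B₁ B₂ (monomial m c) = c • (B₁ ^ m 0 * B₂ ^ m 1) := by
  rw [evalMat_apply]
  exact MvPolynomial.sum_monomial_eq (by simp)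

lemma evalMat_C_mul (k : ℕ) (B₁ B₂ : Matrix (Fin k) (Fin k) ℂ)
    (a : ℂ) (p : MvPolynomial (Fin 2) ℂ) :
    evalMat k B₁ B₂ (C a * p) = a • evalMat k B₁ B₂ p := by
  induction p using MvPolynomial.induction_on' with
  | monomial m c => rw [C_mul_monomial, evalMat_monomial, evalMat_monomial, mul_smul]
  | add p q hp hq => rw [mul_add, map_add, map_add, hp, hq, smul_add]

lemma evalMat_X0_mul (k : ℕ) (B₁ B₂ : Matrix (Fin k) (Fin k) ℂ)
    (p : MvPolynomial (Fin 2) ℂ) :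
    evalMat k B₁ B₂ (X 0 * p) = B₁ * evalMat k B₁ B₂ p := by
  induction p using MvPolynomial.induction_on' with
  | monomial m c =>
    rw [show (X 0 : MvPolynomial (Fin 2) ℂ) = monomial (Finsupp.single 0 1) 1 from rfl,
      monomial_mul, evalMat_monomial, evalMat_monomial, one_mul]
    have h0 : ((Finsupp.single (0 : Fin 2) 1 + m : Fin 2 →₀ ℕ)) 0 = 1 + m 0 := by
      simp [Finsupp.add_apply]
    have h1 : ((Finsupp.single (0 : Fin 2) 1 + m : Fin 2 →₀ ℕ)) 1 = m 1 := by
      simp [Finsupp.add_apply, Finsupp.single_apply]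
    rw [h0, h1, pow_add, pow_one, mul_assoc, mul_smul_comm]
  | add p q hp hq =>
    rw [mul_add, map_add, map_add, hp, hq, mul_add]

lemma evalMat_X1_mul (k : ℕ) (B₁ B₂ : Matrix (Fin k) (Fin k) ℂ)
    (hcomm : B₁ * B₂ = B₂ * B₁)
    (p : MvPolynomial (Fin 2) ℂ) :
    evalMat k B₁ B₂ (X 1 * p) = B₂ * evalMat k B₁ B₂ p := by
  have hcB : Commute B₂ B₁ := hcomm.symm
  induction p using MvPolynomial.induction_on' with
  | monomial m c =>
    rw [show (X 1 : MvPolynomial (Fin 2) ℂ) = monomial (Finsupp.single 1 1) 1 from rfl,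
      monomial_mul, evalMat_monomial, evalMat_monomial, one_mul]
    have h0 : ((Finsupp.single (1 : Fin 2) 1 + m : Fin 2 →₀ ℕ)) 0 = m 0 := by
      simp [Finsupp.add_apply, Finsupp.single_apply]
    have h1 : ((Finsupp.single (1 : Fin 2) 1 + m : Fin 2 →₀ ℕ)) 1 = 1 + m 1 := by
      simp [Finsupp.add_apply]
    rw [h0, h1, pow_add, pow_one, mul_smul_comm]
    congr 1
    rw [← mul_assoc, ← (hcB.pow_right (m 0)).eq, mul_assoc]
  | add p q hp hq =>
    rw [mul_add, map_add, map_add, hp, hq, mul_add]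

lemma evalMat_commute₁ (k : ℕ) (B₁ B₂ : Matrix (Fin k) (Fin k) ℂ)
    (hcomm : B₁ * B₂ = B₂ * B₁) (p : MvPolynomial (Fin 2) ℂ) :
    B₁ * evalMat k B₁ B₂ p = evalMat k B₁ B₂ p * B₁ := by
  rw [evalMat_apply, Finsupp.sum]
  refine (Commute.sum_right _ _ _ fun m _ => ?_).eq
  exact (((Commute.refl B₁).pow_right _).mul_right
    ((show Commute B₁ B₂ from hcomm).pow_right _)).smul_right _

lemma evalMat_commute₂ (k : ℕ) (B₁ B₂ : Matrix (Fin k) (Fin k) ℂ)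
    (hcomm : B₁ * B₂ = B₂ * B₁) (p : MvPolynomial (Fin 2) ℂ) :
    B₂ * evalMat k B₁ B₂ p = evalMat k B₁ B₂ p * B₂ := by
  rw [evalMat_apply, Finsupp.sum]
  refine (Commute.sum_right _ _ _ fun m _ => ?_).eq
  exact (((show Commute B₂ B₁ from hcomm.symm).pow_right _).mul_right
    ((Commute.refl B₂).pow_right _)).smul_right _

/-- The key step (eqs. 59–62) of the instanton/ideal correspondence on ℝ⁴: if `B₁, B₂` are
commuting `k×k` matrices, `I` a vector, and `ξ ∈ ℂ[z₁,z₂]` satisfies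
`I·ξ = (z₂ − B₂)ψ₁ + (z₁ − B₁)ψ₂` for some vector-valued polynomials `ψ₁, ψ₂`, then
`ξ(B₁,B₂)` annihilates the smallest `B₁,B₂`-invariant subspace containing `I`; in
particular, if `ℂᵏ` is cyclic for `I` (stability), then `ξ(B₁,B₂) = 0`. -/
theorem stmt_19 (k : ℕ) (B₁ B₂ : Matrix (Fin k) (Fin k) ℂ)
    (hcomm : B₁ * B₂ = B₂ * B₁) (I : Fin k → ℂ)
    (ξ : MvPolynomial (Fin 2) ℂ) (ψ₁ ψ₂ : Fin k → MvPolynomial (Fin 2) ℂ)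
    (hres : ∀ i : Fin k,
      C (I i) * ξ =
        (X 1 * ψ₁ i - ∑ j, C (B₂ i j) * ψ₁ j) + (X 0 * ψ₂ i - ∑ j, C (B₁ i j) * ψ₂ j)) :
    (∀ v : Fin k → ℂ,
      (∀ W : Submodule ℂ (Fin k → ℂ),
        (∀ w ∈ W, B₁.mulVec w ∈ W ∧ B₂.mulVec w ∈ W) → I ∈ W → v ∈ W) →
      (∑ m ∈ ξ.support, ξ.coeff m • (B₁ ^ m 0 * B₂ ^ m 1)).mulVec v = 0) ∧
    ((∀ v : Fin k → ℂ, ∀ W : Submodule ℂ (Fin k → ℂ),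
        (∀ w ∈ W, B₁.mulVec w ∈ W ∧ B₂.mulVec w ∈ W) → I ∈ W → v ∈ W) →
      (∑ m ∈ ξ.support, ξ.coeff m • (B₁ ^ m 0 * B₂ ^ m 1)) = 0) := by
  classical
  set F : MvPolynomial (Fin 2) ℂ →+ Matrix (Fin k) (Fin k) ℂ := evalMat k B₁ B₂ with hFdef
  have hF : ∀ p : MvPolynomial (Fin 2) ℂ,
      F p = ∑ m ∈ p.support, p.coeff m • (B₁ ^ m 0 * B₂ ^ m 1) := fun p => by rw [hFdef, evalMat_apply]; exact MvPolynomial.sum_def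
  have hc₁ : ∀ p, B₁ * F p = F p * B₁ := evalMat_commute₁ k B₁ B₂ hcomm
  have hc₂ : ∀ p, B₂ * F p = F p * B₂ := evalMat_commute₂ k B₁ B₂ hcomm
  have hFX0 : ∀ p, F (X 0 * p) = B₁ * F p := evalMat_X0_mul k B₁ B₂
  have hFX1 : ∀ p, F (X 1 * p) = B₂ * F p := evalMat_X1_mul k B₁ B₂ hcomm
  have hFC : ∀ c : ℂ, ∀ p, F (C c * p) = c • F p := evalMat_C_mul k B₁ B₂
  -- the evaluation-on-vectors map
  set e : Fin k → (Fin k → ℂ) := fun i => Pi.single i 1 with he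
  set E : (Fin k → MvPolynomial (Fin 2) ℂ) → (Fin k → ℂ) :=
    fun ψ => ∑ i, (F (ψ i)).mulVec (e i) with hE
  have hsingle : ∀ (a : Fin k → ℂ) (i : Fin k), a i • e i = Pi.single i (a i) := by
    intro a i
    simp only [he]
    rw [← Pi.single_smul, smul_eq_mul, mul_one]
  have hEI : E (fun i => C (I i) * ξ) = (F ξ).mulVec I := by
    have hsum : ∑ i, I i • e i = I := by
      simp_rw [hsingle I]
      exact Finset.univ_sum_single I
    simp only [hE, hFC]
    calc ∑ i, (I i • F ξ).mulVec (e i)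
        = ∑ i, (F ξ).mulVec (I i • e i) := by
          refine Finset.sum_congr rfl fun i _ => ?_
          rw [Matrix.mulVec_smul, Matrix.smul_mulVec]
      _ = (F ξ).mulVec (∑ i, I i • e i) := (mulVec_sum_aux _ _ _).symm
      _ = (F ξ).mulVec I := by rw [hsum]
  -- E of X t * ψ
  have hEXgen : ∀ (Bm : Matrix (Fin k) (Fin k) ℂ) (t : Fin 2),
      (∀ p, F (X t * p) = Bm * F p) →
      ∀ ψ : Fin k → MvPolynomial (Fin 2) ℂ,
      E (fun i => X t * ψ i) = Bm.mulVec (E ψ) := by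
    intro Bm t ht ψ
    simp only [hE, ht]
    rw [mulVec_sum_aux]
    exact Finset.sum_congr rfl fun i _ => (Matrix.mulVec_mulVec _ _ _).symm
  -- E of the constant-matrix action
  have hEB : ∀ (Bm : Matrix (Fin k) (Fin k) ℂ), (∀ p, Bm * F p = F p * Bm) →
      ∀ ψ : Fin k → MvPolynomial (Fin 2) ℂ,
      E (fun i => ∑ j, C (Bm i j) * ψ j) = Bm.mulVec (E ψ) := by
    intro Bm hcB ψ
    simp only [hE, map_sum, hFC]
    calc ∑ i, (∑ j, Bm i j • F (ψ j)).mulVec (e i)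
        = ∑ i, ∑ j, Bm i j • (F (ψ j)).mulVec (e i) := by
          refine Finset.sum_congr rfl fun i _ => ?_
          rw [sum_mulVec_aux]
          exact Finset.sum_congr rfl fun j _ => Matrix.smul_mulVec _ _ _
      _ = ∑ j, ∑ i, Bm i j • (F (ψ j)).mulVec (e i) := Finset.sum_comm
      _ = ∑ j, (F (ψ j)).mulVec (∑ i, Bm i j • e i) := by
          refine Finset.sum_congr rfl fun j _ => ?_
          rw [mulVec_sum_aux]
          exact Finset.sum_congr rfl fun i _ => (Matrix.mulVec_smul _ _ _).symm
      _ = ∑ j, (F (ψ j)).mulVec (Bm.mulVec (e j)) := by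
          refine Finset.sum_congr rfl fun j _ => ?_
          congr 1
          have h1 : ∑ i, Bm i j • e i = fun i => Bm i j := by
            simp_rw [hsingle (fun i => Bm i j)]
            exact Finset.univ_sum_single _
          have h2 : Bm.mulVec (e j) = fun i => Bm i j := by
            simp only [he]
            rw [Matrix.mulVec_single]
            simp
            rfl
          rw [h1, h2]
      _ = ∑ j, (Bm * F (ψ j)).mulVec (e j) := by
          refine Finset.sum_congr rfl fun j _ => ?_
          rw [Matrix.mulVec_mulVec, ← hcB, ← Matrix.mulVec_mulVec]
      _ = Bm.mulVec (E ψ) := by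
          simp only [hE]
          rw [mulVec_sum_aux]
          exact Finset.sum_congr rfl fun j _ => (Matrix.mulVec_mulVec _ _ _).symm
  -- key computation: F ξ annihilates I
  have key : (F ξ).mulVec I = 0 := by
    have h0 : E (fun i => C (I i) * ξ) =
        E (fun i => (X 1 * ψ₁ i - ∑ j, C (B₂ i j) * ψ₁ j)
          + (X 0 * ψ₂ i - ∑ j, C (B₁ i j) * ψ₂ j)) :=
      congrArg E (funext hres)
    have hsplit : E (fun i => (X 1 * ψ₁ i - ∑ j, C (B₂ i j) * ψ₁ j)
          + (X 0 * ψ₂ i - ∑ j, C (B₁ i j) * ψ₂ j))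
        = (E (fun i => X 1 * ψ₁ i) - E (fun i => ∑ j, C (B₂ i j) * ψ₁ j))
          + (E (fun i => X 0 * ψ₂ i) - E (fun i => ∑ j, C (B₁ i j) * ψ₂ j)) := by
      simp only [hE, map_add, map_sub, Matrix.add_mulVec, Matrix.sub_mulVec]
      rw [Finset.sum_add_distrib, Finset.sum_sub_distrib, Finset.sum_sub_distrib]
    rw [hsplit, hEXgen B₂ 1 hFX1 ψ₁, hEXgen B₁ 0 hFX0 ψ₂, hEB B₂ hc₂ ψ₁, hEB B₁ hc₁ ψ₂,
      hEI] at h0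
    rw [h0]
    abel
  rw [show (∑ m ∈ ξ.support, ξ.coeff m • (B₁ ^ m 0 * B₂ ^ m 1)) = F ξ from (hF ξ).symm]
  have part1 : ∀ v : Fin k → ℂ,
      (∀ W : Submodule ℂ (Fin k → ℂ),
        (∀ w ∈ W, B₁.mulVec w ∈ W ∧ B₂.mulVec w ∈ W) → I ∈ W → v ∈ W) →
      (F ξ).mulVec v = 0 := by
    intro v hv
    set W : Submodule ℂ (Fin k → ℂ) := LinearMap.ker (F ξ).mulVecLin with hW
    have hmem : ∀ w : Fin k → ℂ, w ∈ W ↔ (F ξ).mulVec w = 0 := fun w => Iff.rfl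
    have hinv : ∀ w ∈ W, B₁.mulVec w ∈ W ∧ B₂.mulVec w ∈ W := by
      intro w hw
      rw [hmem] at hw
      constructor <;> rw [hmem, Matrix.mulVec_mulVec]
      · rw [← hc₁, ← Matrix.mulVec_mulVec, hw, Matrix.mulVec_zero]
      · rw [← hc₂, ← Matrix.mulVec_mulVec, hw, Matrix.mulVec_zero]
    exact hv W hinv ((hmem I).mpr key)
  refine ⟨part1, fun hv => ?_⟩
  ext i j
  have h := part1 (Pi.single j 1) (hv _)
  have h2 := congrFun h i
  simpa [Matrix.mulVec_single] using h2
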